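/- Let F be a nontrivial finite group, Γ = ⊕_{i∈ℤ} F, and φ the right shift automorphism. Then every element of Γ is φ-twisted conjugate to an element supported at coordinate 0; moreover, two elements α, β supported at coordinate 0 (α_0 = x, β_0 = y, all other coordinates trivial) are φ-twisted conjugate if and only if x = y. -/
import Mathlib


variable (F : Type*) [Group F]

/-- The restricted direct product `⊕_{i∈ℤ} F`: finitely supported functions `ℤ → F`,
as a subgroup of the full product. -/
def DirSum : Subgroup (ℤ → F) where
  carrier := {g | (Function.mulSupport g).Finite}
  mul_mem' := by
    intro a b ha hb
    exact ((ha.union hb).subset (Function.mulSupport_mul a b))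
  one_mem' := by
    simp [Function.mulSupport_one]
  inv_mem' := by
    intro a ha
    simpa [Function.mulSupport_inv] using ha

/-- The right shift automorphism `(φ g)_i = g_{i-1}` on `⊕_{i∈ℤ} F`. -/
def shiftHom : DirSum F →* DirSum F where
  toFun g := ⟨fun i => g.1 (i - 1), by
    have : Function.mulSupport (fun i => g.1 (i - 1)) ⊆
        (fun t => t + 1) '' Function.mulSupport g.1 := by
      intro i hi
      exact ⟨i - 1, hi, by ring⟩
    exact (g.2.image _).subset this⟩
  map_one' := rfl
  map_mul' := by intros; rfl

/-- The element of `⊕_{i∈ℤ} F` supported at coordinate `0` with value `x`. -/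
def deltaElt (F : Type*) [Group F] (x : F) : DirSum F :=
  ⟨fun i => if i = 0 then x else 1, by
    apply Set.Finite.subset (Set.finite_singleton (0 : ℤ))
    intro i hi
    by_contra h
    exact hi (if_neg h)⟩

section Aux

variable {F}

lemma dirsum_coe_eq (g a : DirSum F) (i : ℤ) :
    ((g * a * (shiftHom F g)⁻¹ : DirSum F) : ℤ → F) i = g.1 i * a.1 i * (g.1 (i-1))⁻¹ := rfl

/-- Ordered partial products `f M * f (M-1) * ⋯ * f (M-n+1)` (in this order, left to right). -/
def tower (f : ℤ → F) (M : ℤ) : ℕ → F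
  | 0 => 1
  | n+1 => tower f M n * f (M - n)

lemma tower_succ (f : ℤ → F) (M : ℤ) (n : ℕ) :
    tower f M (n+1) = tower f M n * f (M - n) := rfl

lemma tower_stab (f : ℤ → F) (M K : ℤ) (hf : ∀ i, i < K → f i = 1)
    (n : ℕ) (hn : M - K < (n:ℤ)) : ∀ m : ℕ, n ≤ m → tower f M m = tower f M n := by
  intro m hm
  induction m with
  | zero =>
    have : n = 0 := by omega
    rw [this]
  | succ m ih =>
    rcases Nat.lt_or_ge m n with h | h
    · have : n = m + 1 := by omega
      rw [this]
    · rw [tower_succ, hf (M - m) (by push_cast; omega), mul_one, ih h]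

lemma tower_rec (f : ℤ → F) (M : ℤ) (i : ℤ) (hi : i ≤ M) :
    tower f M (M - (i-1)).toNat = tower f M (M - i).toNat * f i := by
  have h1 : (M - (i-1)).toNat = (M - i).toNat + 1 := by omega
  rw [h1, tower_succ]
  congr 1
  congr 1
  omega

lemma part1 (a : DirSum F) :
    ∃ x : F, ∃ g : DirSum F, deltaElt F x = g * a * (shiftHom F g)⁻¹ := by
  obtain ⟨lo, hlo⟩ := a.2.bddBelow
  obtain ⟨hi, hhi⟩ := a.2.bddAbove
  set M : ℤ := max hi 0 with hM
  set L : ℤ := min lo (-1) with hL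
  have hM0 : 0 ≤ M := le_max_right _ _
  have hL0 : L ≤ -1 := min_le_right _ _
  have ha_out : ∀ i : ℤ, i < L ∨ M < i → a.1 i = 1 := by
    intro i hi'
    by_contra h
    have hmem : i ∈ Function.mulSupport a.1 := h
    rcases hi' with h' | h'
    · exact absurd (hlo hmem) (by omega)
    · exact absurd (hhi hmem) (by omega)
  have ha_lt : ∀ i : ℤ, i < L → a.1 i = 1 := fun i h => ha_out i (Or.inl h)
  set c : F := tower a.1 M (M - L + 1).toNat with hc
  have hstab : ∀ n : ℕ, M - L + 1 ≤ (n:ℤ) → tower a.1 M n = c := by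
    intro n hn
    exact tower_stab a.1 M L ha_lt (M - L + 1).toNat (by omega) n (by omega)
  set g : ℤ → F := fun i =>
    if 0 ≤ i then tower a.1 M (M - i).toNat else c⁻¹ * tower a.1 M (M - i).toNat with hg
  have gpos : ∀ i : ℤ, 0 ≤ i → g i = tower a.1 M (M - i).toNat := fun i h => if_pos h
  have gneg : ∀ i : ℤ, ¬ 0 ≤ i → g i = c⁻¹ * tower a.1 M (M - i).toNat := fun i h => if_neg h
  have hg_mem : Function.mulSupport g ⊆ Set.Icc L M := by
    intro i hi'
    by_contra h
    simp only [Set.mem_Icc, not_and_or, not_le] at h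
    apply hi'
    rcases h with h | h
    · have h0 : ¬ (0 ≤ i) := by omega
      rw [gneg i h0, hstab _ (by omega), inv_mul_cancel]
    · have h0 : (0 ≤ i) := by omega
      have h1 : (M - i).toNat = 0 := by omega
      rw [gpos i h0, h1]
      rfl
  refine ⟨c, ⟨g, (Set.finite_Icc L M).subset hg_mem⟩, ?_⟩
  apply Subtype.ext
  funext i
  rw [dirsum_coe_eq]
  show (if i = 0 then c else 1) = g i * a.1 i * (g (i-1))⁻¹
  rcases lt_trichotomy i 0 with hi' | hi' | hi'
  · -- i < 0
    rw [if_neg (by omega), gneg i (by omega), gneg (i-1) (by omega),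
      tower_rec a.1 M i (by omega)]
    group
  · -- i = 0
    subst hi'
    rw [if_pos rfl, gpos 0 (by omega), gneg (0-1) (by omega), tower_rec a.1 M 0 (by omega)]
    group
  · -- i > 0
    rw [if_neg (by omega), gpos i (by omega), gpos (i-1) (by omega)]
    rcases le_or_gt i M with hiM | hiM
    · rw [tower_rec a.1 M i hiM]
      group
    · have h1 : (M - i).toNat = 0 := by omega
      have h2 : (M - (i-1)).toNat = 0 := by omega
      rw [h1, h2, ha_out i (Or.inr hiM)]
      show (1:F) = tower a.1 M 0 * 1 * (tower a.1 M 0)⁻¹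
      simp [tower]

end Aux

theorem shift_twisted_conjugacy_normal_form
    (F : Type*) [Group F] [Finite F] [Nontrivial F] :
    (∀ a : DirSum F, ∃ x : F,
        ∃ g : DirSum F, deltaElt F x = g * a * (shiftHom F g)⁻¹) ∧
    (∀ x y : F,
        (∃ g : DirSum F, deltaElt F y = g * deltaElt F x * (shiftHom F g)⁻¹) ↔ x = y) := by
  constructor
  · exact part1
  · intro x y
    constructor
    · rintro ⟨g, h⟩
      have hcomp : ∀ i : ℤ, (if i = 0 then y else 1)
          = g.1 i * (if i = 0 then x else 1) * (g.1 (i-1))⁻¹ := by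
        intro i
        have := congrFun (congrArg Subtype.val h) i
        rw [dirsum_coe_eq] at this
        exact this
      have hne : ∀ i : ℤ, i ≠ 0 → g.1 i = g.1 (i-1) := by
        intro i hi
        have h' := hcomp i
        simp only [if_neg hi, mul_one] at h'
        have h'' := h'.symm
        rwa [mul_inv_eq_one] at h''
      have hpos : ∀ n : ℕ, g.1 (n:ℤ) = g.1 0 := by
        intro n
        induction n with
        | zero => rfl
        | succ n ih =>
          have := hne ((n:ℤ)+1) (by omega)
          push_cast
          rw [this]
          simpa using ih
      have hneg : ∀ n : ℕ, g.1 (-1 - (n:ℤ)) = g.1 (-1) := by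
        intro n
        induction n with
        | zero => norm_num
        | succ n ih =>
          have := hne (-1 - (n:ℤ)) (by omega)
          rw [← ih, this]
          congr 1
          push_cast
          ring
      have hg0 : g.1 0 = 1 := by
        by_contra h0
        refine Set.infinite_of_injective_forall_mem
          (f := fun n : ℕ => (n : ℤ)) (fun a b hab => by simpa using hab)
          (fun n => ?_) g.2
        rw [Function.mem_mulSupport, hpos n]; exact h0
      have hgm1 : g.1 (-1) = 1 := by
        by_contra h0
        refine Set.infinite_of_injective_forall_mem
          (f := fun n : ℕ => (-1 - n : ℤ)) (fun a b hab => by simpa using hab)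
          (fun n => ?_) g.2
        rw [Function.mem_mulSupport, hneg n]; exact h0
      have h0 := hcomp 0
      rw [if_pos rfl, if_pos rfl, hg0] at h0
      have e : (0:ℤ) - 1 = -1 := by norm_num
      rw [e, hgm1] at h0
      simpa using h0.symm
    · rintro rfl
      refine ⟨1, ?_⟩
      apply Subtype.ext
      funext i
      rw [dirsum_coe_eq]
      show (if i = 0 then x else 1) = (1:F) * (if i = 0 then x else 1) * (1:F)⁻¹
      simp
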